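/- Let G be a finite perfect CCS group. Then there exist a finite non-abelian simple group S and a positive integer n such that the quotient G/Z(G) is isomorphic to the direct product of n copies of S. -/

import Mathlib

open Subgroup Pointwise

/-- A finite group is a `CCS` group if it is not cyclic, it has a nontrivial proper
characteristic subgroup, and every proper characteristic subgroup is cyclic. -/
def IsCCS (G : Type*) [Group G] : Prop :=
  ¬ IsCyclic G ∧
  (∃ N : Subgroup G, N.Characteristic ∧ N ≠ ⊥ ∧ N ≠ ⊤) ∧
  ∀ N : Subgroup G, N.Characteristic → N ≠ ⊤ → IsCyclic N

/-- The automorphism group of a cyclic group is commutative. -/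
lemma mulAut_comm_of_isCyclic {A : Type*} [Group A] [IsCyclic A] (a b : MulAut A) :
    a * b = b * a := by
  set m := Nat.card A
  let e : Multiplicative (ZMod m) ≃* A := zmodCyclicMulEquiv ‹IsCyclic A›
  let c : MulAut (Multiplicative (ZMod m)) ≃* MulAut A := MulAut.congr e
  obtain ⟨a', rfl⟩ := c.surjective a
  obtain ⟨b', rfl⟩ := c.surjective b
  rw [← map_mul, ← map_mul]
  congr 1
  -- transfer to AddAut (ZMod m), then to (ZMod m)ˣ
  have key : Function.Injective
      (fun x : MulAut (Multiplicative (ZMod m)) =>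
        ZMod.AddAutEquivUnits m (Multiplicative.toAdd (MulAutMultiplicative (ZMod m) x))) := by
    intro x y h
    exact (MulAutMultiplicative (ZMod m)).injective
      (Multiplicative.toAdd.injective ((ZMod.AddAutEquivUnits m).injective h))
  have hmul : ∀ x y : MulAut (Multiplicative (ZMod m)),
      ZMod.AddAutEquivUnits m (Multiplicative.toAdd (MulAutMultiplicative (ZMod m) (x * y))) =
        ZMod.AddAutEquivUnits m (Multiplicative.toAdd (MulAutMultiplicative (ZMod m) x)) +
        ZMod.AddAutEquivUnits m (Multiplicative.toAdd (MulAutMultiplicative (ZMod m) y)) := by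
    intro x y
    rw [map_mul, toAdd_mul, map_add]
  apply key
  simp only [hmul]
  exact add_comm _ _

/-- In a perfect group, a cyclic normal subgroup is central. -/
lemma cyclic_normal_le_center {G : Type*} [Group G] (hperf : commutator G = ⊤)
    (N : Subgroup G) [N.Normal] (hc : IsCyclic N) : N ≤ Subgroup.center G := by
  have hker : commutator G ≤ (MulAut.conjNormal (H := N)).ker := by
    rw [commutator_def, Subgroup.commutator_le]
    intro g₁ _ g₂ _
    rw [MonoidHom.mem_ker, map_commutatorElement, commutatorElement_def,
      mulAut_comm_of_isCyclic (MulAut.conjNormal g₁) (MulAut.conjNormal g₂)]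
    group
  intro x hx
  rw [Subgroup.mem_center_iff]
  intro g
  have h1 : MulAut.conjNormal (H := N) g = 1 := hker (hperf ▸ Subgroup.mem_top g)
  have := MulAut.conjNormal_apply g (⟨x, hx⟩ : N)
  rw [h1] at this
  simp only [MulAut.one_apply] at this
  -- this : ↑⟨x, hx⟩ = g * x * g⁻¹
  have hx' : x = g * x * g⁻¹ := by simpa using this
  calc g * x = (g * x * g⁻¹) * g := by group
  _ = x * g := by rw [← hx']

lemma normal_iSup {G : Type*} [Group G] {ι : Sort*} {f : ι → Subgroup G}
    (h : ∀ i, (f i).Normal) : (⨆ i, f i).Normal := by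
  constructor
  intro x hx g
  refine Subgroup.iSup_induction f (C := fun y => g * y * g⁻¹ ∈ ⨆ i, f i) hx
    (fun i y hy => ?_) (by simpa using Subgroup.one_mem _) (fun y z hy hz => ?_)
  · exact le_iSup f i ((h i).conj_mem y hy g)
  · have : g * (y * z) * g⁻¹ = (g * y * g⁻¹) * (g * z * g⁻¹) := by group
    show g * (y * z) * g⁻¹ ∈ _
    rw [this]; exact Subgroup.mul_mem _ hy hz

/-- In a group, if `A` and all `f i` are normal, the family `f` is independent, and
`A` is disjoint from the join of the `f i`, then the extended family is independent. -/
lemma iSupIndep_snoc {G : Type*} [Group G] {n : ℕ} {f : Fin n → Subgroup G}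
    (hnorm : ∀ i, (f i).Normal) {A : Subgroup G} (hA : A.Normal)
    (hind : iSupIndep f) (hdisj : Disjoint (⨆ i, f i) A) :
    iSupIndep (Fin.snoc f A) := by
  intro i
  refine Fin.lastCases ?_ ?_ i
  · -- i = last
    simp only [Fin.snoc_last]
    refine (hdisj.symm.mono_right ?_ : Disjoint A _)
    refine iSup_le fun j => iSup_le fun hj => ?_
    obtain ⟨j', rfl⟩ := Fin.exists_castSucc_eq.mpr hj
    rw [Fin.snoc_castSucc]
    exact le_iSup f j'
  · intro k
    simp only [Fin.snoc_castSucc]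
    set K : Subgroup G := ⨆ j, ⨆ (_ : j ≠ k), f j with hK
    have hKnorm : K.Normal := normal_iSup fun j => normal_iSup fun _ => hnorm j
    have hKle : K ≤ ⨆ j, f j := iSup_le fun j => iSup_le fun _ => le_iSup f j
    have hsub : (⨆ j, ⨆ (_ : j ≠ Fin.castSucc k), Fin.snoc f A j) ≤ K ⊔ A := by
      refine iSup_le fun j => iSup_le fun hj => ?_
      refine Fin.lastCases ?_ ?_ j hj
      · intro _; rw [Fin.snoc_last]; exact le_sup_right
      · intro j' hj'
        rw [Fin.snoc_castSucc]
        have : j' ≠ k := fun h => hj' (by rw [h])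
        exact le_trans (le_iSup₂ (f := fun j (_ : j ≠ k) => f j) j' this) le_sup_left
    refine Disjoint.mono_right hsub ?_
    rw [disjoint_iff_inf_le]
    intro x ⟨hxk, hxKA⟩
    have hxKA' : x ∈ (K : Set G) * (A : Set G) := by
      rw [← Subgroup.mul_normal K A]; exact hxKA
    obtain ⟨k₀, hk₀, a, ha, rfl⟩ := hxKA'
    have hk₀sup : k₀ ∈ ⨆ j, f j := hKle hk₀
    have hxsup : k₀ * a ∈ ⨆ j, f j := (le_iSup f k) hxk
    have haA : a ∈ (⨆ j, f j) ⊓ A := by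
      constructor
      · have : a = k₀⁻¹ * (k₀ * a) := by group
        rw [this]; exact Subgroup.mul_mem _ (Subgroup.inv_mem _ hk₀sup) hxsup
      · exact ha
    rw [hdisj.eq_bot] at haA
    have ha1 : a = 1 := haA
    subst ha1
    have := hind k
    rw [disjoint_iff_inf_le] at this
    show k₀ * 1 ∈ (⊥ : Subgroup G)
    have hxk' : k₀ ∈ f k := by simpa using hxk
    rw [mul_one]
    exact this ⟨hxk', hk₀⟩

theorem charSimple_structure (Q : Type*) [Group Q] [Finite Q] [Nontrivial Q]
    (hchar : ∀ M : Subgroup Q, M.Characteristic → M = ⊥ ∨ M = ⊤) :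
    ∃ (N : Subgroup Q) (n : ℕ), 0 < n ∧ IsSimpleGroup N ∧ Nonempty (Q ≃* (Fin n → N)) := by
  classical
  have hfinsub : Finite (Subgroup Q) :=
    Finite.of_injective (fun H => (H : Set Q)) SetLike.coe_injective
  -- a minimal normal subgroup N
  obtain ⟨N, ⟨hNnorm, hNbot⟩, hNmincard⟩ :
      ∃ N : Subgroup Q, (N.Normal ∧ N ≠ ⊥) ∧
        ∀ K : Subgroup Q, (K.Normal ∧ K ≠ ⊥) → Nat.card K ≤ Nat.card N →
          Nat.card N = Nat.card K := by
    have := Set.Finite.exists_minimalFor (fun K : Subgroup Q => Nat.card K) {K : Subgroup Q | K.Normal ∧ K ≠ ⊥}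
      (Set.toFinite _) ⟨⊤, inferInstance, by simp [eq_comm, (bot_lt_top (α := Subgroup Q)).ne]⟩
    obtain ⟨N, hN, hmin⟩ := this
    exact ⟨N, hN, fun K hK hle => le_antisymm (hmin hK hle) hle⟩
  have hNmin : ∀ K : Subgroup Q, K.Normal → K ≠ ⊥ → K ≤ N → K = N := by
    intro K hK hKbot hKle
    exact Subgroup.eq_of_le_of_card_ge hKle
      (le_of_eq (hNmincard K ⟨hK, hKbot⟩ (Subgroup.card_le_of_le hKle)))
  -- automorphic images of N are minimal normal
  have hmapnorm : ∀ φ : Q ≃* Q, (N.map φ.toMonoidHom).Normal := fun φ =>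
    hNnorm.map φ.toMonoidHom φ.surjective
  have hmapbot : ∀ φ : Q ≃* Q, N.map φ.toMonoidHom ≠ ⊥ := fun φ h =>
    hNbot ((Subgroup.map_eq_bot_iff_of_injective N (f := φ.toMonoidHom) φ.injective).mp h)
  have hmapmap : ∀ (φ : Q ≃* Q) (K : Subgroup Q),
      (K.map φ.toMonoidHom).map φ.symm.toMonoidHom = K := by
    intro φ K
    ext x
    simp [Subgroup.mem_map]
  have hmapmin : ∀ φ : Q ≃* Q, ∀ K : Subgroup Q, K.Normal → K ≠ ⊥ →
      K ≤ N.map φ.toMonoidHom → K = N.map φ.toMonoidHom := by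
    intro φ K hK hKbot hKle
    have h1 : K.map φ.symm.toMonoidHom ≤ N := by
      have := Subgroup.map_mono (f := φ.symm.toMonoidHom) hKle
      rwa [hmapmap φ N] at this
    have h2 : K.map φ.symm.toMonoidHom = N :=
      hNmin _ (hK.map _ φ.symm.surjective)
        (fun h => hKbot ((Subgroup.map_eq_bot_iff_of_injective K (f := φ.symm.toMonoidHom) φ.symm.injective).mp h)) h1
    calc K = (K.map φ.symm.toMonoidHom).map φ.toMonoidHom := by
            have := hmapmap φ.symm K
            simpa using this.symm
    _ = N.map φ.toMonoidHom := by rw [h2]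
  -- the "good" subgroups
  set good : Subgroup Q → Prop := fun H => ∃ (n : ℕ) (f : Fin n → Q ≃* Q),
    H = (⨆ i, N.map ((f i).toMonoidHom)) ∧
      iSupIndep (fun i => N.map ((f i).toMonoidHom)) with hgood
  have hNgood : good N := by
    refine ⟨1, fun _ => MulEquiv.refl Q, ?_, ?_⟩
    · have hrefl : N.map (MulEquiv.refl Q).toMonoidHom = N := by ext x; simp
      simp only [hrefl]
      exact (iSup_const).symm
    · intro i
      have : (⨆ j, ⨆ (_ : j ≠ i), N.map ((MulEquiv.refl Q)).toMonoidHom) = ⊥ := by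
        refine le_bot_iff.mp (iSup_le fun j => iSup_le fun hj => absurd (Subsingleton.elim j i) hj)
      rw [this]
      exact disjoint_bot_right
  obtain ⟨H, hHgood, hHmax⟩ := Set.Finite.exists_maximalFor (fun K : Subgroup Q => Nat.card K) {H : Subgroup Q | good H}
    (Set.toFinite _) ⟨N, hNgood⟩
  obtain ⟨n, f, hHdef, hHind⟩ := hHgood
  -- every automorphic image of N is contained in H
  have hkey : ∀ φ : Q ≃* Q, N.map φ.toMonoidHom ≤ H := by
    intro φ
    by_contra hle
    have hnormi0 : ∀ i, (N.map ((f i).toMonoidHom)).Normal := fun i => hmapnorm (f i)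
    set M := N.map φ.toMonoidHom with hM
    have hdisj : Disjoint H M := by
      have hHnorm : H.Normal := by
        rw [hHdef]; exact normal_iSup hnormi0
      have hMnorm : M.Normal := hmapnorm φ
      have hMHnorm : (M ⊓ H).Normal := @Subgroup.normal_inf_normal _ _ M H hMnorm hHnorm
      by_cases hbot : M ⊓ H = ⊥
      · rw [disjoint_iff, inf_comm H M]; exact hbot
      · exfalso
        have h1 : M ⊓ H = M := hmapmin φ _ hMHnorm hbot inf_le_left
        exact hle (h1 ▸ inf_le_right)
    -- extend the family
    have hnormi : ∀ i, (N.map ((f i).toMonoidHom)).Normal := hnormi0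
    have hsnoceq : (fun i : Fin (n+1) => N.map (((Fin.snoc f φ : Fin (n+1) → Q ≃* Q) i)).toMonoidHom)
        = Fin.snoc (fun i => N.map ((f i).toMonoidHom)) M := by
      funext j
      refine Fin.lastCases ?_ ?_ j
      · simp only [Fin.snoc_last, hM]
      · intro j'; simp only [Fin.snoc_castSucc]
    have hindext : iSupIndep (fun i : Fin (n+1) =>
        N.map (((Fin.snoc f φ : Fin (n+1) → Q ≃* Q) i)).toMonoidHom) := by
      rw [hsnoceq]
      exact iSupIndep_snoc hnormi (hmapnorm φ) hHind (by rw [← hHdef]; exact hdisj)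
    have hsupeq : (⨆ i : Fin (n+1),
        N.map (((Fin.snoc f φ : Fin (n+1) → Q ≃* Q) i)).toMonoidHom) = H ⊔ M := by
      rw [hsnoceq]
      apply le_antisymm
      · refine iSup_le fun j => ?_
        refine Fin.lastCases ?_ ?_ j
        · rw [Fin.snoc_last]; exact le_sup_right
        · intro j'; rw [Fin.snoc_castSucc, hHdef]
          exact le_trans (le_iSup (fun i => Subgroup.map ((f i).toMonoidHom) N) j') le_sup_left
      · refine sup_le ?_ ?_
        · rw [hHdef]
          refine iSup_le fun j => ?_
          have := le_iSup (Fin.snoc (fun i => N.map ((f i).toMonoidHom)) M) (Fin.castSucc j)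
          rwa [Fin.snoc_castSucc] at this
        · have := le_iSup (Fin.snoc (fun i => N.map ((f i).toMonoidHom)) M) (Fin.last n)
          rwa [Fin.snoc_last] at this
    have hH'good : good (H ⊔ M) := ⟨n+1, Fin.snoc f φ, hsupeq.symm, hindext⟩
    have hlt : H < H ⊔ M := lt_of_le_of_ne le_sup_left
      (fun h => hle (le_trans le_sup_right (le_of_eq h.symm)))
    have hcard := le_antisymm (Subgroup.card_le_of_le hlt.le) (hHmax hH'good (Subgroup.card_le_of_le hlt.le))
    exact hlt.ne (Subgroup.eq_of_le_of_card_ge hlt.le (le_of_eq hcard.symm))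
  -- H is characteristic, hence ⊤
  have hHchar : H.Characteristic := by
    rw [Subgroup.characteristic_iff_map_le]
    intro ψ
    have hmapH : H.map ψ.toMonoidHom = ⨆ i, N.map (((f i).trans ψ).toMonoidHom) := by
      rw [hHdef, Subgroup.map_iSup]
      congr 1
      funext i
      rw [Subgroup.map_map]
      rfl
    rw [hmapH]
    exact iSup_le fun i => hkey _
  have hNleH : N ≤ H := by
    have := hkey (MulEquiv.refl Q)
    have heq : N.map (MulEquiv.refl Q).toMonoidHom = N := by ext x; simp
    rwa [heq] at this
  have hHtop : H = ⊤ := by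
    rcases hchar H hHchar with h | h
    · exact absurd (le_bot_iff.mp (h ▸ hNleH)) hNbot
    · exact h
  -- n is positive
  have hn : 0 < n := by
    rcases Nat.eq_zero_or_pos n with h | h
    · subst h
      rw [iSup_of_empty] at hHdef
      exact absurd (hHdef.symm.trans hHtop) bot_ne_top
    · exact h
  set g : Fin n → Subgroup Q := fun i => N.map ((f i).toMonoidHom) with hg
  have hgnorm : ∀ i, (g i).Normal := fun i => hmapnorm (f i)
  have hcomm : Pairwise fun i j => ∀ x y : Q, x ∈ g i → y ∈ g j → Commute x y := by
    intro i j hij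
    exact fun x y hx hy => Subgroup.commute_of_normal_of_disjoint _ _ (hgnorm i) (hgnorm j)
      (hHind.pairwiseDisjoint hij) x y hx hy
  have hsurj : Function.Surjective (Subgroup.noncommPiCoprod hcomm) := by
    rw [← MonoidHom.range_eq_top, Subgroup.noncommPiCoprod_range, ← hHdef]
    exact hHtop
  have hinj : Function.Injective (Subgroup.noncommPiCoprod hcomm) :=
    Subgroup.injective_noncommPiCoprod_of_iSupIndep hHind
  let e1 : (∀ i, g i) ≃* Q := MulEquiv.ofBijective _ ⟨hinj, hsurj⟩
  set i0 : Fin n := ⟨0, hn⟩ with hi0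
  -- g i0 is simple
  haveI hgnt : Nontrivial (g i0) := (Subgroup.nontrivial_iff_ne_bot _).mpr (hmapbot (f i0))
  have hsimple : IsSimpleGroup (g i0) := by
    refine ⟨fun K hK => ?_⟩
    set K' : Subgroup Q := K.map (g i0).subtype with hK'
    have hK'le : K' ≤ g i0 := Subgroup.map_subtype_le K
    have hconj : ∀ q : Q, ∀ x ∈ K', q * x * q⁻¹ ∈ K' := by
      have hgen : ∀ j : Fin n, ∀ q ∈ g j, ∀ x ∈ K', q * x * q⁻¹ ∈ K' := by
        intro j q hq x hx
        by_cases hj : j = i0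
        · subst hj
          obtain ⟨x', hx', rfl⟩ := hx
          have hmem : (⟨q, hq⟩ : g i0) * x' * (⟨q, hq⟩ : g i0)⁻¹ ∈ K := hK.conj_mem x' hx' ⟨q, hq⟩
          exact ⟨_, hmem, rfl⟩
        · have hc : Commute q x := hcomm hj q x hq (hK'le hx)
          have : q * x * q⁻¹ = x := by
            rw [hc.eq]; group
          rw [this]; exact hx
      intro q x hx
      have hqtop : q ∈ ⨆ j, g j := by rw [← hHdef, hHtop]; trivial
      revert x
      refine Subgroup.iSup_induction g (C := fun q => ∀ x ∈ K', q * x * q⁻¹ ∈ K') hqtop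
        hgen ?_ ?_
      · intro x hx; simpa using hx
      · intro a b ha hb x hx
        have : a * b * x * (a * b)⁻¹ = a * (b * x * b⁻¹) * a⁻¹ := by group
        rw [this]
        exact ha _ (hb _ hx)
    have hK'norm : K'.Normal := ⟨fun x hx q => hconj q x hx⟩
    by_cases hbot : K' = ⊥
    · left
      exact (Subgroup.map_eq_bot_iff_of_injective K (Subgroup.subtype_injective _)).mp hbot
    · right
      have : K' = g i0 := hmapmin (f i0) K' hK'norm hbot hK'le
      apply Subgroup.map_injective (Subgroup.subtype_injective (g i0))
      rw [← hK', this]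
      have : ((⊤ : Subgroup (g i0)).map (g i0).subtype) = g i0 := by
        rw [← MonoidHom.range_eq_map, Subgroup.range_subtype]
      rw [this]
  -- assemble the isomorphism
  let eN : ∀ i, (g i) ≃* (g i0) := fun i =>
    ((Subgroup.equivMapOfInjective N ((f i)).toMonoidHom (f i).injective).symm.trans
      (Subgroup.equivMapOfInjective N ((f i0)).toMonoidHom (f i0).injective))
  exact ⟨g i0, n, hn, hsimple, ⟨e1.symm.trans (MulEquiv.piCongrRight eN)⟩⟩

/-- If `G` is a finite perfect CCS group, then `G/Z(G)` is isomorphic to a direct power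
`S^n` (with `n ≥ 1`) of a finite non-abelian simple group `S`. -/
theorem perfect_CCS_central_quotient
    (G : Type*) [Group G] [Finite G] (hperf : commutator G = ⊤) (hccs : IsCCS G) :
    ∃ (S : Type) (_ : Group S) (n : ℕ), 0 < n ∧ Finite S ∧ IsSimpleGroup S ∧
      (∃ a b : S, a * b ≠ b * a) ∧
      Nonempty ((G ⧸ Subgroup.center G) ≃* (Fin n → S)) := by
  classical
  set Z := Subgroup.center G with hZ
  set Q := G ⧸ Z with hQdef
  set π : G →* Q := QuotientGroup.mk' Z with hπ
  have hπsurj : Function.Surjective π := QuotientGroup.mk'_surjective Z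
  -- `Z ≠ ⊤`
  have hZne : Z ≠ ⊤ := by
    intro h
    have hcomm' : ∀ a b : G, a * b = b * a := fun a b => by
      have hb : b ∈ Z := h ▸ Subgroup.mem_top b
      exact Subgroup.mem_center_iff.mp hb a
    have hbot : commutator G ≤ ⊥ := by
      rw [_root_.commutator_def, Subgroup.commutator_le]
      intro g₁ _ g₂ _
      rw [Subgroup.mem_bot, commutatorElement_eq_one_iff_commute]
      exact hcomm' g₁ g₂
    have : Subsingleton G := by
      refine subsingleton_of_forall_eq 1 fun x => ?_
      have hx : x ∈ commutator G := hperf ▸ Subgroup.mem_top x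
      exact Subgroup.mem_bot.mp (hbot hx)
    exact hccs.1 isCyclic_of_subsingleton
  -- `Q` is nontrivial
  haveI hQnt : Nontrivial Q := by
    obtain ⟨x, hx⟩ : ∃ x : G, x ∉ Z := by
      by_contra h
      push_neg at h
      exact hZne (eq_top_iff.mpr fun x _ => h x)
    refine ⟨π x, 1, fun h => hx ?_⟩
    rwa [hπ, ← MonoidHom.mem_ker, QuotientGroup.ker_mk'] at h
  -- `Q` is perfect
  have hQperf : commutator Q = ⊤ := by
    have h1 : Subgroup.map π (commutator G) = commutator Q := by
      rw [_root_.commutator_def, _root_.commutator_def, Subgroup.map_commutator,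
        Subgroup.map_top_of_surjective π hπsurj]
    rw [← h1, hperf, Subgroup.map_top_of_surjective π hπsurj]
  -- characteristic subgroups of `Q` are trivial
  have hchar : ∀ M : Subgroup Q, M.Characteristic → M = ⊥ ∨ M = ⊤ := by
    intro M hM
    by_cases hMtop : M = ⊤
    · exact Or.inr hMtop
    left
    set Nc : Subgroup G := M.comap π with hNc
    have hNchar : Nc.Characteristic := by
      rw [Subgroup.characteristic_iff_comap_eq]
      intro φ
      have hZmap : Z.map φ.toMonoidHom = Z := by
        have : Z.Characteristic := hZ ▸ Subgroup.centerCharacteristic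
        exact Subgroup.characteristic_iff_map_eq.mp this φ
      set φbar : Q ≃* Q := QuotientGroup.congr Z Z φ hZmap with hφbar
      have hMbar : M.comap φbar.toMonoidHom = M :=
        Subgroup.characteristic_iff_comap_eq.mp hM φbar
      ext x
      simp only [hNc, Subgroup.mem_comap]
      have hsq : π (φ.toMonoidHom x) = φbar.toMonoidHom (π x) := rfl
      rw [hsq]
      conv_rhs => rw [← hMbar]
      rw [Subgroup.mem_comap]

    have hNne : Nc ≠ ⊤ := by
      intro h
      apply hMtop
      have := Subgroup.map_comap_eq_self_of_surjective hπsurj M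
      rw [← this, ← hNc, h, Subgroup.map_top_of_surjective π hπsurj]
    have hNcyc : IsCyclic Nc := hccs.2.2 Nc hNchar hNne
    haveI := hNchar
    haveI : Nc.Normal := inferInstance
    have hle : Nc ≤ Z := cyclic_normal_le_center hperf Nc hNcyc
    have := Subgroup.map_comap_eq_self_of_surjective hπsurj M
    rw [← this, ← hNc]
    rw [eq_bot_iff]
    intro y hy
    obtain ⟨x, hx, rfl⟩ := hy
    have : x ∈ Z := hle hx
    rw [Subgroup.mem_bot, hπ, ← MonoidHom.mem_ker, QuotientGroup.ker_mk']
    exact this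
  -- structure theorem
  obtain ⟨N, n, hn, hNsimple, ⟨e⟩⟩ := charSimple_structure Q hchar
  -- `N` is nonabelian
  have hnab : ∃ a b : N, a * b ≠ b * a := by
    by_contra h
    push_neg at h
    have hQcomm : ∀ x y : Q, x * y = y * x := by
      intro x y
      apply e.injective
      rw [map_mul, map_mul]
      funext i
      exact h _ _
    have hbot : commutator Q ≤ ⊥ := by
      rw [_root_.commutator_def, Subgroup.commutator_le]
      intro g₁ _ g₂ _
      rw [Subgroup.mem_bot, commutatorElement_eq_one_iff_commute]
      exact hQcomm g₁ g₂
    rw [hQperf] at hbot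
    have : Subsingleton Q := by
      refine subsingleton_of_forall_eq 1 fun x => ?_
      exact Subgroup.mem_bot.mp (hbot (Subgroup.mem_top x))
    exact false_of_nontrivial_of_subsingleton Q
  -- transfer to `Type 0`
  haveI : Finite N := inferInstance
  obtain ⟨S, hSgroup, hSfin, ⟨eS⟩⟩ := Finite.exists_type_univ_nonempty_mulEquiv.{_, 0} N
  refine ⟨S, hSgroup, n, hn, inferInstance, ?_, ?_, ?_⟩
  · haveI : Nontrivial S := eS.symm.toEquiv.nontrivial
    exact IsSimpleGroup.isSimpleGroup_of_surjective eS.toMonoidHom eS.surjective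
  · obtain ⟨a, b, hab⟩ := hnab
    exact ⟨eS a, eS b, fun h => hab (eS.injective (by rw [map_mul, map_mul, h]))⟩
  · exact ⟨e.trans (MulEquiv.piCongrRight fun _ => eS)⟩
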